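/- arXiv:2411.06281 — 4 statements merged into one kernel-verified Lean document; each statement's English description precedes it below -/
import Mathlib

section
/- Let H be a Hilbert space, A a densely defined self-adjoint operator on H, (Ω, μ) a measure space, m : Ω → ℝ measurable with associated self-adjoint multiplication operator T on L²(Ω,μ), and U : H → L²(Ω,μ) an isometry such that T ∘ U extends U ∘ A (i.e. for all x ∈ dom(A), U x ∈ dom(T) and T(U x) = U(A x)). Then: (1) the range U(H) reduces T, i.e. proj_{U(H)} ∘ T ⊆ T ∘ proj_{U(H)} as graphs; and (2) U ∘ A = T ∘ U, i.e. for every x ∈ H, U x ∈ dom(T) implies x ∈ dom(A). -/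
open MeasureTheory InnerProductSpace

section Aux

open Complex

variable {Ω : Type*} [MeasurableSpace Ω] {μ : Measure Ω}

theorem memLp_mul' (φ : Ω → ℂ) (hφ : Measurable φ) (C : ℝ) (hC : ∀ ω, ‖φ ω‖ ≤ C)
    (f : Lp ℂ 2 μ) : MemLp (fun ω => φ ω * f ω) 2 μ := by
  refine MemLp.of_le_mul (c := C) (Lp.memLp f)
    (hφ.aestronglyMeasurable.mul (Lp.aestronglyMeasurable f))
    (Filter.Eventually.of_forall fun ω => ?_)
  rw [norm_mul]
  exact mul_le_mul_of_nonneg_right (hC ω) (norm_nonneg _)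

/-- multiplication by a bounded measurable function as a CLM on L². -/
noncomputable def mulLp (μ : Measure Ω) (φ : Ω → ℂ) (hφ : Measurable φ) (C : ℝ)
    (hC : ∀ ω, ‖φ ω‖ ≤ C) : Lp ℂ 2 μ →L[ℂ] Lp ℂ 2 μ := by
  refine LinearMap.mkContinuous
    { toFun := fun f => (memLp_mul' φ hφ C hC f).toLp _
      map_add' := ?_
      map_smul' := ?_ } (max C 0) ?_
  · intro f g
    rw [← MemLp.toLp_add]
    apply MemLp.toLp_congr
    filter_upwards [Lp.coeFn_add f g] with ω hω
    simp only [hω, Pi.add_apply, mul_add]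
  · intro c f
    simp only [RingHom.id_apply]
    rw [← MemLp.toLp_const_smul c (memLp_mul' φ hφ C hC f)]
    apply MemLp.toLp_congr
    filter_upwards [Lp.coeFn_smul c f] with ω hω
    simp only [hω, Pi.smul_apply, smul_eq_mul]
    ring
  · intro f
    rw [LinearMap.coe_mk, AddHom.coe_mk, Lp.norm_toLp, Lp.norm_def]
    have h1 : eLpNorm (fun ω => φ ω * f ω) 2 μ ≤
        ENNReal.ofReal (max C 0) * eLpNorm f 2 μ := by
      have := eLpNorm_le_mul_eLpNorm_of_ae_le_mul (c := max C 0)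
        (f := fun ω => φ ω * f ω) (g := (f : Ω → ℂ)) (μ := μ)
        (Filter.Eventually.of_forall fun ω => by
          rw [norm_mul]
          exact mul_le_mul_of_nonneg_right ((hC ω).trans (le_max_left _ _)) (norm_nonneg _)) 2
      simpa using this
    calc (eLpNorm (fun ω => φ ω * f ω) 2 μ).toReal
        ≤ (ENNReal.ofReal (max C 0) * eLpNorm f 2 μ).toReal := by
          apply ENNReal.toReal_mono _ h1
          exact ENNReal.mul_ne_top ENNReal.ofReal_ne_top (Lp.eLpNorm_ne_top f)
      _ ≤ max C 0 * (eLpNorm f 2 μ).toReal := by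
          rw [ENNReal.toReal_mul, ENNReal.toReal_ofReal (le_max_right _ _)]

theorem mulLp_coeFn (μ : Measure Ω) (φ : Ω → ℂ) (hφ : Measurable φ) (C : ℝ)
    (hC : ∀ ω, ‖φ ω‖ ≤ C) (f : Lp ℂ 2 μ) :
    (mulLp μ φ hφ C hC f : Ω → ℂ) =ᵐ[μ] fun ω => φ ω * f ω :=
  MemLp.coeFn_toLp (memLp_mul' φ hφ C hC f)

end Aux

/-- If `A` is densely defined and self-adjoint on `H`, `T` is the self-adjoint
multiplication operator by a measurable real function `m` on `L²(Ω,μ)`, and `U : H → L²(Ω,μ)` is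
an isometry such that `T ∘ U` extends `U ∘ A`, then (1) the range of `U` reduces `T`
(`proj_{U(H)} ∘ T ⊆ T ∘ proj_{U(H)}`), and (2) `U ∘ A = T ∘ U`, i.e. `U x ∈ dom T → x ∈ dom A`. -/
theorem stmt6 {H : Type*} [NormedAddCommGroup H] [InnerProductSpace ℂ H] [CompleteSpace H]
    {Ω : Type*} [MeasurableSpace Ω] (μ : Measure Ω)
    (A : H →ₗ.[ℂ] H) (hAdense : Dense (A.domain : Set H)) (hAsa : A.adjoint = A)
    (m : Ω → ℝ) (hm : Measurable m)
    (T : Lp ℂ 2 μ →ₗ.[ℂ] Lp ℂ 2 μ)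
    (hTdom : ∀ f : Lp ℂ 2 μ,
      f ∈ T.domain ↔ MemLp (fun ω => (m ω : ℂ) * f ω) 2 μ)
    (hTval : ∀ f : T.domain,
      (T f : Ω → ℂ) =ᵐ[μ] fun ω => (m ω : ℂ) * (f : Lp ℂ 2 μ) ω)
    (hTsa : T.adjoint = T)
    (U : H →ₗᵢ[ℂ] Lp ℂ 2 μ)
    (hext : ∀ x : A.domain, ∃ h : U x ∈ T.domain, T ⟨U x, h⟩ = U (A x))
    (P : Lp ℂ 2 μ →L[ℂ] Lp ℂ 2 μ)
    (hP : ∀ y : Lp ℂ 2 μ,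
      P y ∈ Set.range U ∧ ∀ z ∈ Set.range U, ⟪y - P y, z⟫_ℂ = 0) :
    (∀ f : T.domain, ∃ h : P (f : Lp ℂ 2 μ) ∈ T.domain, T ⟨P f, h⟩ = P (T f)) ∧
    (∀ x : H, U x ∈ T.domain → x ∈ A.domain) := by
  classical
  -- basic scalar facts
  have hplus_ne : ∀ ω, (m ω : ℂ) + Complex.I ≠ 0 := fun ω h => by
    have := congrArg Complex.im h; simp at this
  have hminus_ne : ∀ ω, (m ω : ℂ) - Complex.I ≠ 0 := fun ω h => by
    have := congrArg Complex.im h; simp at this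
  have hnorm_plus : ∀ ω, (1:ℝ) ≤ ‖(m ω : ℂ) + Complex.I‖ := by
    intro ω
    have := Complex.abs_im_le_norm ((m ω : ℂ) + Complex.I)
    simpa using this
  have hnorm_minus : ∀ ω, (1:ℝ) ≤ ‖(m ω : ℂ) - Complex.I‖ := by
    intro ω
    have := Complex.abs_im_le_norm ((m ω : ℂ) - Complex.I)
    simpa using this
  have hinv_plus : ∀ ω, ‖((m ω : ℂ) + Complex.I)⁻¹‖ ≤ 1 := by
    intro ω
    rw [norm_inv]
    exact inv_le_one_of_one_le₀ (hnorm_plus ω)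
  have hinv_minus : ∀ ω, ‖((m ω : ℂ) - Complex.I)⁻¹‖ ≤ 1 := by
    intro ω
    rw [norm_inv]
    exact inv_le_one_of_one_le₀ (hnorm_minus ω)
  have hm' : Measurable fun ω => (m ω : ℂ) := Complex.measurable_ofReal.comp hm
  have hmeas_plus : Measurable fun ω => ((m ω : ℂ) + Complex.I)⁻¹ :=
    (hm'.add_const _).inv
  have hmeas_minus : Measurable fun ω => ((m ω : ℂ) - Complex.I)⁻¹ :=
    (hm'.sub_const _).inv
  set R : Lp ℂ 2 μ →L[ℂ] Lp ℂ 2 μ :=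
    mulLp μ _ hmeas_plus 1 hinv_plus with hRdef
  set R' : Lp ℂ 2 μ →L[ℂ] Lp ℂ 2 μ :=
    mulLp μ _ hmeas_minus 1 hinv_minus with hR'def
  have hRval : ∀ f : Lp ℂ 2 μ,
      (R f : Ω → ℂ) =ᵐ[μ] fun ω => ((m ω : ℂ) + Complex.I)⁻¹ * f ω :=
    fun f => mulLp_coeFn μ _ hmeas_plus 1 hinv_plus f
  have hR'val : ∀ f : Lp ℂ 2 μ,
      (R' f : Ω → ℂ) =ᵐ[μ] fun ω => ((m ω : ℂ) - Complex.I)⁻¹ * f ω :=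
    fun f => mulLp_coeFn μ _ hmeas_minus 1 hinv_minus f
  -- domain equality of the adjoint of A
  have hdomEq : A.adjoint.domain = A.domain := congrArg LinearPMap.domain hAsa
  -- symmetry of A
  have hsym : ∀ a b : A.domain, ⟪A a, (b : H)⟫_ℂ = ⟪(a : H), A b⟫_ℂ := by
    have h := LinearPMap.adjoint_isFormalAdjoint hAdense (T := A)
    rw [hAsa] at h
    exact fun a b => h a b
  -- deficiency-type density
  have hdense : ∀ c : ℂ, (starRingEnd ℂ) c = -c → c ≠ 0 →
      Dense (Set.range fun x : A.domain => A x + c • (x : H)) := by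
    intro c hcconj hc0
    set V : Submodule ℂ H := LinearMap.range (A.toFun + c • A.domain.subtype) with hV
    have hrange : (Set.range fun x : A.domain => A x + c • (x : H)) = ↑V := by
      ext u
      simp only [Set.mem_range, hV, SetLike.mem_coe, LinearMap.mem_range, LinearMap.add_apply,
        LinearMap.smul_apply, Submodule.coe_subtype]
      rfl
    rw [hrange, Submodule.dense_iff_topologicalClosure_eq_top,
      Submodule.topologicalClosure_eq_top_iff, Submodule.eq_bot_iff]
    intro y hy
    rw [Submodule.mem_orthogonal] at hy
    have hAx : ∀ x : A.domain, ⟪A x, y⟫_ℂ = c * ⟪(x : H), y⟫_ℂ := by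
      intro x
      have h0 := hy _ (LinearMap.mem_range.mpr ⟨x, rfl⟩)
      simp only [LinearMap.add_apply, LinearMap.smul_apply, Submodule.coe_subtype,
        inner_add_left, inner_smul_left, hcconj, LinearPMap.toFun_eq_coe] at h0
      linear_combination h0
    have hmem : y ∈ A.domain := by
      rw [← hdomEq]
      apply LinearPMap.mem_adjoint_domain_of_exists
      refine ⟨c • y, fun x => ?_⟩
      have h1 : ⟪y, A x⟫_ℂ = (starRingEnd ℂ) ⟪A x, y⟫_ℂ := (inner_conj_symm _ _).symm
      rw [h1, hAx, map_mul, hcconj, inner_conj_symm, inner_smul_left, hcconj]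
    set yd : A.domain := ⟨y, hmem⟩ with hyd
    have h1 : ⟪A yd, y⟫_ℂ = c * ⟪y, y⟫_ℂ := hAx yd
    have h2 : ⟪A yd, y⟫_ℂ = ⟪y, A yd⟫_ℂ := hsym yd yd
    have h3 : ⟪y, A yd⟫_ℂ = (starRingEnd ℂ) ⟪A yd, y⟫_ℂ := (inner_conj_symm _ _).symm
    have h4 : c * ⟪y, y⟫_ℂ = -c * ⟪y, y⟫_ℂ := by
      rw [← h1, h2, h3, h1, map_mul, hcconj, inner_conj_symm]
    have h5 : (2 * c) * ⟪y, y⟫_ℂ = 0 := by linear_combination h4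
    have h6 : ⟪y, y⟫_ℂ = 0 := by
      rcases mul_eq_zero.mp h5 with h | h
      · exact absurd h (by simpa using hc0)
      · exact h
    exact inner_self_eq_zero.mp h6
  -- instantiate density at ±I
  have hdense_plus : Dense (Set.range fun x : A.domain => A x + Complex.I • (x : H)) :=
    hdense Complex.I (by simp) Complex.I_ne_zero
  have hdense_minus : Dense (Set.range fun x : A.domain => A x + (-Complex.I) • (x : H)) :=
    hdense (-Complex.I) (by simp) (neg_ne_zero.mpr Complex.I_ne_zero)
  -- the a.e. value of U (A x)
  have hUAT : ∀ x : A.domain,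
      (U (A x) : Ω → ℂ) =ᵐ[μ] fun ω => (m ω : ℂ) * (U x : Ω → ℂ) ω := by
    intro x
    obtain ⟨h, he⟩ := hext x
    have h2 := hTval ⟨U x, h⟩
    rw [he] at h2
    exact h2
  have hC1plus : ∀ x : A.domain, R (U (A x + Complex.I • (x : H))) = U x := by
    intro x
    apply Lp.ext (μ := μ)
    have e1 : U (A x + Complex.I • (x : H)) = U (A x) + Complex.I • U x := by
      rw [map_add, _root_.map_smul]
    rw [e1]
    filter_upwards [hRval (U (A x) + Complex.I • U x),
      Lp.coeFn_add (U (A x)) (Complex.I • U x), Lp.coeFn_smul Complex.I (U x), hUAT x]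
      with ω e2 e3 e4 e5
    rw [e2, e3, Pi.add_apply, e4, Pi.smul_apply, smul_eq_mul, e5]
    field_simp [hplus_ne ω]
  have hC1minus : ∀ x : A.domain, R' (U (A x + (-Complex.I) • (x : H))) = U x := by
    intro x
    apply Lp.ext (μ := μ)
    have e1 : U (A x + (-Complex.I) • (x : H)) = U (A x) + (-Complex.I) • U x := by
      rw [map_add, _root_.map_smul]
    rw [e1]
    filter_upwards [hR'val (U (A x) + (-Complex.I) • U x),
      Lp.coeFn_add (U (A x)) ((-Complex.I) • U x), Lp.coeFn_smul (-Complex.I) (U x), hUAT x]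
      with ω e2 e3 e4 e5
    rw [e2, e3, Pi.add_apply, e4, Pi.smul_apply, smul_eq_mul, e5]
    have h0 := hminus_ne ω
    field_simp
    ring
  have hUrangeClosed : IsClosed (Set.range U) :=
    U.isometry.isClosedEmbedding.isClosed_range
  have hC1 : ∀ h : H, R (U h) ∈ Set.range U := by
    intro h
    have hclosed : IsClosed {h : H | R (U h) ∈ Set.range U} :=
      hUrangeClosed.preimage (R.continuous.comp U.continuous)
    refine hclosed.closure_subset_iff.mpr ?_ (hdense_plus h)
    rintro _ ⟨x, rfl⟩
    rw [Set.mem_setOf_eq, hC1plus x]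
    exact ⟨x, rfl⟩
  have hC1' : ∀ h : H, R' (U h) ∈ Set.range U := by
    intro h
    have hclosed : IsClosed {h : H | R' (U h) ∈ Set.range U} :=
      hUrangeClosed.preimage (R'.continuous.comp U.continuous)
    refine hclosed.closure_subset_iff.mpr ?_ (hdense_minus h)
    rintro _ ⟨x, rfl⟩
    rw [Set.mem_setOf_eq, hC1minus x]
    exact ⟨x, rfl⟩
  have hRadj : ∀ f g : Lp ℂ 2 μ, ⟪R f, g⟫_ℂ = ⟪f, R' g⟫_ℂ := by
    intro f g
    rw [L2.inner_def, L2.inner_def]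
    apply integral_congr_ae
    filter_upwards [hRval f, hR'val g] with ω h1 h2
    rw [RCLike.inner_apply, RCLike.inner_apply, h1, h2, map_mul, map_inv₀, map_add,
      Complex.conj_ofReal, Complex.conj_I]
    ring_nf
  have hTsym : ∀ f g : T.domain,
      ⟪(T f : Lp ℂ 2 μ), (g : Lp ℂ 2 μ)⟫_ℂ = ⟪(f : Lp ℂ 2 μ), (T g : Lp ℂ 2 μ)⟫_ℂ := by
    intro f g
    rw [L2.inner_def, L2.inner_def]
    apply integral_congr_ae
    filter_upwards [hTval f, hTval g] with ω h1 h2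
    rw [RCLike.inner_apply, RCLike.inner_apply, h1, h2, map_mul, Complex.conj_ofReal]
    ring
  have hPuniq : ∀ y z : Lp ℂ 2 μ, z ∈ Set.range U →
      (∀ w ∈ Set.range U, ⟪y - z, w⟫_ℂ = 0) → P y = z := by
    intro y z hz horth
    obtain ⟨a, ha⟩ := (hP y).1
    obtain ⟨b, rfl⟩ := hz
    have hmem : P y - U b ∈ Set.range U := ⟨a - b, by rw [map_sub, ha]⟩
    have h0 : ⟪P y - U b, P y - U b⟫_ℂ = 0 := by
      have e : P y - U b = (y - U b) - (y - P y) := by abel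
      nth_rewrite 1 [e]
      rw [inner_sub_left, horth _ hmem, (hP y).2 _ hmem, sub_zero]
    have h1 := inner_self_eq_zero.mp h0
    rw [sub_eq_zero] at h1
    exact h1
  have hPR : ∀ y : Lp ℂ 2 μ, P (R y) = R (P y) := by
    intro y
    refine hPuniq _ _ ?_ ?_
    · obtain ⟨a, ha⟩ := (hP y).1
      rw [← ha]
      exact hC1 a
    · intro w hw
      obtain ⟨b, rfl⟩ := hw
      rw [← map_sub R, hRadj]
      exact (hP y).2 _ (hC1' b)
  have hRdomT : ∀ g : Lp ℂ 2 μ, R g ∈ T.domain := by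
    intro g
    rw [hTdom]
    refine MemLp.of_le_mul (c := 1) (Lp.memLp g)
      ((hm'.aestronglyMeasurable).mul (Lp.aestronglyMeasurable _)) ?_
    filter_upwards [hRval g] with ω h
    have hb : ‖(m ω : ℂ) * ((m ω : ℂ) + Complex.I)⁻¹‖ ≤ 1 := by
      rw [norm_mul, norm_inv]
      have h1 : ‖(m ω : ℂ)‖ ≤ ‖(m ω : ℂ) + Complex.I‖ := by
        have h2 := Complex.abs_re_le_norm ((m ω : ℂ) + Complex.I)
        simpa using h2
      calc ‖(m ω : ℂ)‖ * ‖(m ω : ℂ) + Complex.I‖⁻¹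
          ≤ ‖(m ω : ℂ) + Complex.I‖ * ‖(m ω : ℂ) + Complex.I‖⁻¹ := by
            gcongr
        _ = 1 := mul_inv_cancel₀ (norm_ne_zero_iff.mpr (hplus_ne ω))
    rw [h, ← mul_assoc, norm_mul]
    exact mul_le_mul_of_nonneg_right hb (norm_nonneg _)
  have hTR : ∀ g : Lp ℂ 2 μ, T ⟨R g, hRdomT g⟩ = g - Complex.I • R g := by
    intro g
    apply Lp.ext (μ := μ)
    filter_upwards [hTval ⟨R g, hRdomT g⟩, hRval g, Lp.coeFn_sub g (Complex.I • R g),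
      Lp.coeFn_smul Complex.I (R g)] with ω h1 h2 h3 h4
    rw [h3, Pi.sub_apply, h4, Pi.smul_apply, smul_eq_mul, h1]
    show (m ω : ℂ) * (R g : Ω → ℂ) ω = g ω - Complex.I * (R g : Ω → ℂ) ω
    rw [h2]
    have h0 := hplus_ne ω
    field_simp
    ring
  have hRT : ∀ f : T.domain,
      R ((T f : Lp ℂ 2 μ) + Complex.I • (f : Lp ℂ 2 μ)) = (f : Lp ℂ 2 μ) := by
    intro f
    apply Lp.ext (μ := μ)
    filter_upwards [hRval ((T f : Lp ℂ 2 μ) + Complex.I • (f : Lp ℂ 2 μ)),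
      Lp.coeFn_add (T f : Lp ℂ 2 μ) (Complex.I • (f : Lp ℂ 2 μ)),
      Lp.coeFn_smul Complex.I (f : Lp ℂ 2 μ), hTval f] with ω h1 h2 h3 h4
    rw [h1, h2, Pi.add_apply, h3, Pi.smul_apply, smul_eq_mul, h4]
    field_simp [hplus_ne ω]
  constructor
  · intro f
    have hPf : P (f : Lp ℂ 2 μ) =
        R (P ((T f : Lp ℂ 2 μ) + Complex.I • (f : Lp ℂ 2 μ))) := by
      rw [← hPR, hRT]
    have hmem : P (f : Lp ℂ 2 μ) ∈ T.domain := by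
      rw [hPf]; exact hRdomT _
    refine ⟨hmem, ?_⟩
    have hsub : (⟨P (f : Lp ℂ 2 μ), hmem⟩ : T.domain) =
        ⟨R (P ((T f : Lp ℂ 2 μ) + Complex.I • (f : Lp ℂ 2 μ))),
          hRdomT _⟩ := Subtype.ext hPf
    rw [hsub, hTR, ← hPR, hRT, map_add, _root_.map_smul, add_sub_cancel_right]
  · intro x hx
    obtain ⟨y, hy⟩ := (hP (T ⟨U x, hx⟩ : Lp ℂ 2 μ)).1
    rw [← hdomEq]
    apply LinearPMap.mem_adjoint_domain_of_exists
    refine ⟨y, fun z => ?_⟩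
    obtain ⟨hz, hez⟩ := hext z
    calc ⟪y, (z : H)⟫_ℂ = ⟪U y, U z⟫_ℂ := (U.inner_map_map _ _).symm
      _ = ⟪P (T ⟨U x, hx⟩ : Lp ℂ 2 μ), U z⟫_ℂ := by rw [hy]
      _ = ⟪(T ⟨U x, hx⟩ : Lp ℂ 2 μ), U z⟫_ℂ := by
          have h0 := (hP (T ⟨U x, hx⟩ : Lp ℂ 2 μ)).2 (U z) ⟨z, rfl⟩
          rw [inner_sub_left, sub_eq_zero] at h0
          exact h0.symm
      _ = ⟪((⟨U x, hx⟩ : T.domain) : Lp ℂ 2 μ), (T ⟨U z, hz⟩ : Lp ℂ 2 μ)⟫_ℂ :=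
          hTsym ⟨U x, hx⟩ ⟨U z, hz⟩
      _ = ⟪U x, U (A z)⟫_ℂ := by rw [hez]
      _ = ⟪x, A z⟫_ℂ := U.inner_map_map _ _
end

section
/- The set of functions { x ↦ exp(2πi q x) · exp(-x²) : q ∈ ℚ } spans a dense subspace of L²(ℝ, Lebesgue). Equivalently, if f ∈ L²(ℝ) satisfies ∫_ℝ f(x) · exp(-2πi q x) · exp(-x²) dx = 0 for all q ∈ ℚ, then f = 0 a.e. -/
open MeasureTheory Real Complex FourierTransform SchwartzMap
open scoped ENNReal ContDiff

/-- A smooth compactly supported real function, viewed as a complex-valued Schwartz function. -/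
noncomputable def toSchwartzAux (h : ℝ → ℝ) (h1 : ContDiff ℝ ∞ h) (h2 : HasCompactSupport h) :
    SchwartzMap ℝ ℂ where
  toFun := fun x => (h x : ℂ)
  smooth' := Complex.ofRealCLM.contDiff.comp h1
  decay' := by
    intro k n
    have hiter : ∀ x : ℝ, ‖iteratedFDeriv ℝ n (fun x => (h x : ℂ)) x‖
        = ‖iteratedFDeriv ℝ n h x‖ := fun x =>
      Complex.ofRealLI.norm_iteratedFDeriv_comp_left h1.contDiffAt (by exact_mod_cast le_top)
    have hcont : Continuous fun x : ℝ => ‖x‖ ^ k * ‖iteratedFDeriv ℝ n h x‖ :=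
      ((continuous_norm.pow k).mul
        ((h1.continuous_iteratedFDeriv (by exact_mod_cast le_top)).norm))
    have hsupp : HasCompactSupport fun x : ℝ => ‖x‖ ^ k * ‖iteratedFDeriv ℝ n h x‖ :=
      ((h2.iteratedFDeriv n).norm.mul_left)
    obtain ⟨C, hC⟩ := (hcont.bddAbove_range_of_hasCompactSupport hsupp).imp
      (fun C hC => fun x => hC (Set.mem_range_self x))
    exact ⟨C, fun x => by rw [hiter]; exact hC x⟩

/-- The family `{x ↦ exp(2πiqx)·exp(-x²) : q ∈ ℚ}` spans a dense subspace
of `L²(ℝ)`; equivalently, if `f ∈ L²(ℝ)` satisfies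
`∫ f(x) exp(-2πiqx) exp(-x²) dx = 0` for all rationals `q`, then `f = 0` a.e. -/
theorem stmt14 (f : Lp ℂ 2 (volume : Measure ℝ))
    (hf : ∀ q : ℚ, ∫ x : ℝ, (f : ℝ → ℂ) x *
        Complex.exp (-2 * Real.pi * Complex.I * (q : ℂ) * (x : ℂ)) *
        Complex.exp (-(x : ℂ) ^ 2) = 0) :
    f = 0 := by
  set g : ℝ → ℂ := fun x => Complex.exp (-(x : ℂ) ^ 2) * (f : ℝ → ℂ) x with hg_def
  -- the Gaussian is in L²
  have hgauss_cont : Continuous fun x : ℝ => Complex.exp (-(x : ℂ) ^ 2) := by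
    fun_prop
  have hgauss_mem : MemLp (fun x : ℝ => Complex.exp (-(x : ℂ) ^ 2)) 2 volume := by
    rw [memLp_two_iff_integrable_sq_norm hgauss_cont.aestronglyMeasurable]
    have : ∀ x : ℝ, ‖Complex.exp (-(x : ℂ) ^ 2)‖ ^ 2 = Real.exp (-2 * x ^ 2) := by
      intro x
      rw [Complex.norm_exp, ← Real.exp_nat_mul]
      have hre : (-(x : ℂ) ^ 2) = ((-x ^ 2 : ℝ) : ℂ) := by push_cast; ring
      rw [hre, Complex.ofReal_re]
      congr 1
      ring
    simp_rw [this]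
    simpa using integrable_exp_neg_mul_sq (b := 2) (by norm_num)
  -- g is integrable (product of two L² functions)
  have hg_int : Integrable g volume := by
    rw [← memLp_one_iff_integrable]
    exact (Lp.memLp f).smul hgauss_mem (hpqr := ⟨by simp [one_div, ENNReal.inv_two_add_inv_two]⟩)
  -- the Fourier transform of g vanishes at rational points
  have hFg_rat : ∀ q : ℚ, 𝓕 g (q : ℝ) = 0 := by
    intro q
    rw [Real.fourier_real_eq_integral_exp_smul, ← hf q]
    congr 1 with x
    rw [smul_eq_mul,
      show ((-2 * π * x * (q : ℝ) : ℝ) : ℂ) * Complex.I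
        = -2 * (π : ℂ) * Complex.I * (q : ℂ) * (x : ℂ) by push_cast; ring]
    simp only [hg_def]
    ring
  -- the Fourier transform of g is continuous, hence vanishes everywhere
  have hFg_cont : Continuous (𝓕 g) :=
    VectorFourier.fourierIntegral_continuous Real.continuous_fourierChar continuous_inner hg_int
  have hFg : 𝓕 g = 0 := by
    apply (Rat.denseRange_cast (𝕜 := ℝ)).equalizer hFg_cont continuous_zero
    funext q
    simpa using hFg_rat q
  -- test g against any Schwartz function
  have key : ∀ φ : SchwartzMap ℝ ℂ, ∫ x : ℝ, g x * (φ : ℝ → ℂ) x = 0 := by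
    intro φ
    set ψ := (fourierTransformCLE ℂ (SchwartzMap ℝ ℂ)).symm φ with hψ
    have hFψ : 𝓕 (ψ : ℝ → ℂ) = (φ : ℝ → ℂ) := by
      have : fourierTransformCLE ℂ (SchwartzMap ℝ ℂ) ψ = φ :=
        (fourierTransformCLE ℂ (SchwartzMap ℝ ℂ)).apply_symm_apply φ
      rw [← this]
      rfl
    have hmul := VectorFourier.integral_fourierIntegral_smul_eq_flip (L := innerₗ ℝ)
      (f := g) (g := (ψ : ℝ → ℂ)) (μ := volume) (ν := volume)
      Real.continuous_fourierChar continuous_inner hg_int ψ.integrable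
    have hflip : VectorFourier.fourierIntegral 𝐞 volume (innerₗ ℝ).flip (ψ : ℝ → ℂ)
        = 𝓕 (ψ : ℝ → ℂ) := by
      funext w
      rw [Real.fourier_eq]
      unfold VectorFourier.fourierIntegral
      congr 1 with v
      congr 2
      simp [LinearMap.flip_apply, real_inner_comm]
    rw [hflip, hFψ] at hmul
    have hzero : (∫ ξ : ℝ, (VectorFourier.fourierIntegral 𝐞 volume (innerₗ ℝ) g ξ)
        • (ψ : ℝ → ℂ) ξ) = 0 := by
      have : ∀ ξ : ℝ, VectorFourier.fourierIntegral 𝐞 volume (innerₗ ℝ) g ξ = 0 := by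
        intro ξ
        have := congrFun hFg ξ
        exact this
      simp [this]
    rw [hzero] at hmul
    simp_rw [smul_eq_mul] at hmul
    exact hmul.symm
  -- conclude g = 0 a.e.
  have hg_ae : ∀ᵐ x : ℝ ∂volume, g x = 0 := by
    apply ae_eq_zero_of_integral_contDiff_smul_eq_zero hg_int.locallyIntegrable
    intro h h1 h2
    have := key (toSchwartzAux h h1 h2)
    rw [← this]
    congr 1 with x
    show h x • g x = g x * (h x : ℂ)
    rw [Complex.real_smul, mul_comm]
  -- hence f = 0 a.e.
  have hf_ae : (f : ℝ → ℂ) =ᵐ[volume] 0 := by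
    filter_upwards [hg_ae] with x hx
    have := mul_eq_zero.mp hx
    rcases this with h | h
    · exact absurd h (Complex.exp_ne_zero _)
    · exact h
  exact Lp.ext (hf_ae.trans (Lp.coeFn_zero ℂ 2 volume).symm)
end

section
/- Let p ≥ 1 and f : ℝ → ℂ be continuous, in L^p(ℝ), and with |f| decreasing at infinity (there is m ∈ ℕ such that x > y ≥ m implies |f(x)| ≤ |f(y)| and x < y ≤ -m implies |f(x)| ≤ |f(y)|). Fix r ∈ ℤ. For each N ∈ ℕ choose sample points c_k^N ∈ [(k+r)/N, (k+r+1)/N] and define the step function f_N = Σ_{-N² ≤ k < N²} f(c_k^N) · 1_{[k/N, (k+1)/N)}. Then f_N → f in L^p(ℝ) as N → ∞. -/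
open MeasureTheory Filter
open scoped ENNReal NNReal

/-- Let `p ≥ 1`, `f : ℝ → ℂ` continuous, in `L^p(ℝ)`, with `|f|` decreasing
at infinity.  For each `N`, choose sample points `c N k ∈ [(k+r)/N, (k+r+1)/N]` and form the
step function `f_N = ∑_{-N² ≤ k < N²} f(c N k) 1_{[k/N,(k+1)/N)}`.  Then `f_N → f` in `L^p`. -/
theorem stmt15 (p : ℝ) (hp : 1 ≤ p) (f : ℝ → ℂ)
    (hcont : Continuous f)
    (hLp : MemLp f (ENNReal.ofReal p) (volume : Measure ℝ))
    (hdec : ∃ m : ℕ,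
      (∀ x y : ℝ, (m : ℝ) ≤ y → y < x → ‖f x‖ ≤ ‖f y‖) ∧
      (∀ x y : ℝ, y ≤ -(m : ℝ) → x < y → ‖f x‖ ≤ ‖f y‖))
    (r : ℤ) (c : ℕ → ℤ → ℝ)
    (hc : ∀ (N : ℕ) (k : ℤ),
      c N k ∈ Set.Icc (((k : ℝ) + r) / N) (((k : ℝ) + r + 1) / N))
    (fN : ℕ → ℝ → ℂ)
    (hfN : ∀ (N : ℕ) (x : ℝ), fN N x =
      ∑ k ∈ Finset.Ico (-(N : ℤ) ^ 2) ((N : ℤ) ^ 2),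
        Set.indicator (Set.Ico ((k : ℝ) / N) (((k : ℝ) + 1) / N)) (fun _ => f (c N k)) x) :
    Tendsto (fun N : ℕ => eLpNorm (fun x => fN N x - f x) (ENNReal.ofReal p) volume)
      atTop (nhds 0) := by
  obtain ⟨m, hm1, hm2⟩ := hdec
  have hp0 : 0 < p := lt_of_lt_of_le one_pos hp
  set P : ℝ≥0∞ := ENNReal.ofReal p with hP
  have hP0 : P ≠ 0 := (ENNReal.ofReal_pos.2 hp0).ne'
  have hPtop : P ≠ ∞ := ENNReal.ofReal_ne_top
  have hPreal : P.toReal = p := ENNReal.toReal_ofReal hp0.le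
  set R : ℝ := |(r : ℝ)| + 1 with hR
  have hR0 : 0 < R := by positivity
  set B : ℝ := m + R with hB
  have hB0 : 0 < B := by positivity
  -- membership characterization
  have hmem : ∀ (N : ℕ), 0 < N → ∀ (k : ℤ) (x : ℝ),
      x ∈ Set.Ico ((k : ℝ) / N) (((k : ℝ) + 1) / N) ↔ k = ⌊(N : ℝ) * x⌋ := by
    intro N hN k x
    have hN' : (0 : ℝ) < N := Nat.cast_pos.2 hN
    rw [Set.mem_Ico, div_le_iff₀ hN', lt_div_iff₀ hN', mul_comm x (N : ℝ)]
    constructor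
    · rintro ⟨h1, h2⟩
      exact (Int.floor_eq_iff.2 ⟨h1, by push_cast; exact h2⟩).symm
    · rintro rfl
      refine ⟨Int.floor_le _, ?_⟩
      push_cast
      exact Int.lt_floor_add_one _
  -- explicit formula for fN
  have hfN' : ∀ (N : ℕ), 0 < N → ∀ x : ℝ,
      fN N x = if ⌊(N : ℝ) * x⌋ ∈ Finset.Ico (-(N : ℤ) ^ 2) ((N : ℤ) ^ 2)
        then f (c N ⌊(N : ℝ) * x⌋) else 0 := by
    intro N hN x
    rw [hfN]
    split_ifs with h
    · rw [Finset.sum_eq_single_of_mem _ h]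
      · exact Set.indicator_of_mem ((hmem N hN _ x).2 rfl) _
      · intro k hk hne
        exact Set.indicator_of_notMem (fun hx => hne ((hmem N hN k x).1 hx)) _
    · refine Finset.sum_eq_zero fun k hk => ?_
      refine Set.indicator_of_notMem (fun hx => ?_) _
      rw [(hmem N hN k x).1 hx] at hk
      exact h hk
  -- distance between sample point and x
  have hdist : ∀ (N : ℕ), 0 < N → ∀ (k : ℤ) (x : ℝ),
      x ∈ Set.Ico ((k : ℝ) / N) (((k : ℝ) + 1) / N) → |c N k - x| ≤ R / N := by
    intro N hN k x hx
    have hN' : (0 : ℝ) < N := Nat.cast_pos.2 hN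
    obtain ⟨hc1, hc2⟩ := hc N k
    obtain ⟨hx1, hx2⟩ := hx
    rw [abs_sub_le_iff]
    constructor
    · have : c N k - x ≤ ((k : ℝ) + r + 1) / N - (k : ℝ) / N := by linarith
      calc c N k - x ≤ ((k : ℝ) + r + 1) / N - (k : ℝ) / N := this
        _ = ((r : ℝ) + 1) / N := by ring
        _ ≤ R / N := by
            gcongr
            have := le_abs_self (r : ℝ)
            linarith
    · have : x - c N k ≤ ((k : ℝ) + 1) / N - ((k : ℝ) + r) / N := by linarith
      calc x - c N k ≤ ((k : ℝ) + 1) / N - ((k : ℝ) + r) / N := this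
        _ = (1 - (r : ℝ)) / N := by ring
        _ ≤ R / N := by
            gcongr
            have := neg_abs_le (r : ℝ)
            linarith
  -- bound on compact part
  obtain ⟨M0, hM0⟩ := (isCompact_Icc (a := -(B + R)) (b := B + R)).exists_bound_of_continuousOn
    hcont.continuousOn
  set M : ℝ := max M0 0 with hM
  have hMb : ∀ y ∈ Set.Icc (-(B + R)) (B + R), ‖f y‖ ≤ M := fun y hy =>
    (hM0 y hy).trans (le_max_left _ _)
  have hM0' : (0 : ℝ) ≤ M := le_max_right _ _
  -- dominating function
  set g : ℝ → ℝ := fun x => ‖f (x - R)‖ + ‖f (x + R)‖ +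
    Set.indicator (Set.Icc (-B) B) (fun _ => M) x with hg
  have hg0 : ∀ x, 0 ≤ g x := by
    intro x
    have : 0 ≤ Set.indicator (Set.Icc (-B) B) (fun _ => M) x :=
      Set.indicator_nonneg (fun _ _ => hM0') x
    positivity
  have hgmem : MemLp g P volume := by
    refine MemLp.add (MemLp.add ?_ ?_) ?_
    · exact ((hLp.comp_measurePreserving (measurePreserving_sub_right volume R)).norm)
    · exact ((hLp.comp_measurePreserving (measurePreserving_add_right volume R)).norm)
    · exact memLp_indicator_const P measurableSet_Icc M
        (Or.inr (by simp [Real.volume_Icc]))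
  -- norm monotonicity helper, phrased with Complex.abs
  have habs : ∀ z : ℂ, ‖z‖ = ‖z‖ := fun z => rfl
  -- domination
  have hbound : ∀ (N : ℕ) (x : ℝ), ‖fN N x‖ ≤ g x := by
    intro N x
    rcases Nat.eq_zero_or_pos N with rfl | hN
    · have : fN 0 x = 0 := by simp [hfN]
      rw [this, norm_zero]; exact hg0 x
    rw [hfN' N hN x]
    split_ifs with hk
    · set k := ⌊(N : ℝ) * x⌋
      have hxk : x ∈ Set.Ico ((k : ℝ) / N) (((k : ℝ) + 1) / N) := (hmem N hN k x).2 rfl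
      have hd : |c N k - x| ≤ R := by
        refine (hdist N hN k x hxk).trans ?_
        have hN1 : (1 : ℝ) ≤ N := by exact_mod_cast hN
        exact div_le_self hR0.le hN1
      rw [abs_sub_le_iff] at hd
      have hcl : x - R ≤ c N k := by linarith [hd.2]
      have hcu : c N k ≤ x + R := by linarith [hd.1]
      have hind_nonneg : 0 ≤ Set.indicator (Set.Icc (-B) B) (fun _ => M) x :=
        Set.indicator_nonneg (fun _ _ => hM0') x
      by_cases hx1 : B ≤ x
      · -- right tail
        have hmy : (m : ℝ) ≤ x - R := by rw [hB] at hx1; linarith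
        have : ‖f (c N k)‖ ≤ ‖f (x - R)‖ := by
          rcases eq_or_lt_of_le hcl with h | h
          · rw [← h]
          · exact hm1 (c N k) (x - R) hmy h
        have h2 : (0:ℝ) ≤ ‖f (x + R)‖ := norm_nonneg _
        simp only [hg]; linarith
      by_cases hx2 : x ≤ -B
      · -- left tail
        have hmy : x + R ≤ -(m : ℝ) := by rw [hB] at hx2; linarith
        have : ‖f (c N k)‖ ≤ ‖f (x + R)‖ := by
          rcases eq_or_lt_of_le hcu with h | h
          · rw [h]
          · exact hm2 (c N k) (x + R) hmy h
        have h2 : (0:ℝ) ≤ ‖f (x - R)‖ := norm_nonneg _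
        simp only [hg]; linarith
      -- middle
      push_neg at hx1 hx2
      have hxmem : x ∈ Set.Icc (-B) B := ⟨hx2.le, hx1.le⟩
      have hcmem : c N k ∈ Set.Icc (-(B + R)) (B + R) := by
        constructor <;> [linarith; linarith]
      have h1 : ‖f (c N k)‖ ≤ M := hMb _ hcmem
      have : Set.indicator (Set.Icc (-B) B) (fun _ => M) x = M :=
        Set.indicator_of_mem hxmem _
      simp only [hg]
      have h2 : (0:ℝ) ≤ ‖f (x - R)‖ := norm_nonneg _
      have h3 : (0:ℝ) ≤ ‖f (x + R)‖ := norm_nonneg _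
      linarith
    · rw [norm_zero]; exact hg0 x
  -- pointwise convergence
  have hptw : ∀ x : ℝ, Tendsto (fun N => fN N x) atTop (nhds (f x)) := by
    intro x
    have hcx : Tendsto (fun N : ℕ => c N ⌊(N : ℝ) * x⌋) atTop (nhds x) := by
      rw [tendsto_iff_dist_tendsto_zero]
      have h1 : Tendsto (fun N : ℕ => R / N) atTop (nhds 0) :=
        tendsto_const_div_atTop_nhds_zero_nat R
      refine squeeze_zero' (Eventually.of_forall fun N => dist_nonneg) ?_ h1
      filter_upwards [eventually_gt_atTop 0] with N hN
      rw [Real.dist_eq]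
      exact hdist N hN _ x ((hmem N hN _ x).2 rfl)
    have hfc : Tendsto (fun N : ℕ => f (c N ⌊(N : ℝ) * x⌋)) atTop (nhds (f x)) :=
      (hcont.tendsto x).comp hcx
    refine Tendsto.congr' ?_ hfc
    filter_upwards [eventually_ge_atTop (⌈|x|⌉₊ + 1)] with N hN
    have hN0 : 0 < N := lt_of_lt_of_le (Nat.succ_pos _) hN
    have hxN : |x| < N := by
      have h1 : (⌈|x|⌉₊ : ℝ) + 1 ≤ N := by exact_mod_cast hN
      have := Nat.le_ceil |x|
      linarith
    have hmem' : ⌊(N : ℝ) * x⌋ ∈ Finset.Ico (-(N : ℤ) ^ 2) ((N : ℤ) ^ 2) := by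
      rw [Finset.mem_Ico]
      have hN' : (0 : ℝ) < N := Nat.cast_pos.2 hN0
      constructor
      · rw [Int.le_floor]
        push_cast
        have : -((N : ℝ) * N) ≤ (N : ℝ) * x := by
          have := (abs_le.1 hxN.le).1
          nlinarith
        calc (-(N:ℝ)^2) = -((N:ℝ) * N) := by ring
          _ ≤ (N : ℝ) * x := this
      · rw [Int.floor_lt]
        push_cast
        have : (N : ℝ) * x < (N : ℝ) * N := by
          have := (abs_le.1 hxN.le).2
          nlinarith [(le_abs_self x), hxN]
        calc (N : ℝ) * x < (N : ℝ) * N := this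
          _ = (N : ℝ)^2 := by ring
    rw [hfN' N hN0 x, if_pos hmem']
  -- measurability of fN
  have hfNm : ∀ N, Measurable (fN N) := by
    intro N
    have : fN N = fun x => ∑ k ∈ Finset.Ico (-(N : ℤ) ^ 2) ((N : ℤ) ^ 2),
        Set.indicator (Set.Ico ((k : ℝ) / N) (((k : ℝ) + 1) / N)) (fun _ => f (c N k)) x :=
      funext (hfN N)
    rw [this]
    exact Finset.measurable_sum _ fun k _ => (measurable_const.indicator measurableSet_Ico)
  -- dominated convergence on the lintegral level
  have hIbound : (∫⁻ x, (‖g x + ‖f x‖‖₊ : ℝ≥0∞) ^ p ∂(volume : Measure ℝ)) ≠ ∞ := by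
    have hmem' : MemLp (fun x => g x + ‖f x‖) P volume := hgmem.add hLp.norm
    have := lintegral_rpow_enorm_lt_top_of_eLpNorm_lt_top hP0 hPtop hmem'.2
    rw [hPreal] at this
    exact this.ne
  have hI : Tendsto (fun N => ∫⁻ x, (‖fN N x - f x‖₊ : ℝ≥0∞) ^ p ∂(volume : Measure ℝ))
      atTop (nhds 0) := by
    have h0 : (0 : ℝ≥0∞) = ∫⁻ (_ : ℝ), 0 ∂(volume : Measure ℝ) := by simp
    rw [h0]
    refine tendsto_lintegral_of_dominated_convergence
      (fun x => (‖g x + ‖f x‖‖₊ : ℝ≥0∞) ^ p) ?_ ?_ hIbound ?_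
    · intro N
      exact (((hfNm N).sub hcont.measurable).nnnorm.coe_nnreal_ennreal).pow_const p
    · intro N
      refine Eventually.of_forall fun x => ?_
      refine ENNReal.rpow_le_rpow ?_ hp0.le
      rw [ENNReal.coe_le_coe, ← NNReal.coe_le_coe, coe_nnnorm, coe_nnnorm]
      have h1 : ‖fN N x - f x‖ ≤ ‖fN N x‖ + ‖f x‖ := norm_sub_le _ _
      have h2 : ‖fN N x‖ + ‖f x‖ ≤ g x + ‖f x‖ := by linarith [hbound N x]
      have h3 : g x + ‖f x‖ ≤ ‖g x + ‖f x‖‖ := le_abs_self _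
      linarith
    · refine Eventually.of_forall fun x => ?_
      have h1 : Tendsto (fun N => fN N x - f x) atTop (nhds 0) := by
        have := (hptw x).sub tendsto_const_nhds (g := fun _ => f x)
        simpa using this
      have hcont2 : Continuous fun z : ℂ => ((‖z‖₊ : ℝ≥0∞)) ^ p :=
        ENNReal.continuous_rpow_const.comp (ENNReal.continuous_coe.comp continuous_nnnorm)
      have := (hcont2.tendsto 0).comp h1
      simpa [Function.comp_def, ENNReal.zero_rpow_of_pos hp0] using this
  -- conclude
  have hrw : ∀ N : ℕ, eLpNorm (fun x => fN N x - f x) P volume =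
      (∫⁻ x, (‖fN N x - f x‖₊ : ℝ≥0∞) ^ p ∂(volume : Measure ℝ)) ^ (1 / p) := by
    intro N
    rw [eLpNorm_eq_lintegral_rpow_enorm_toReal hP0 hPtop, hPreal]; rfl
  simp_rw [hrw]
  have hcont3 : Continuous fun a : ℝ≥0∞ => a ^ (1 / p) := ENNReal.continuous_rpow_const
  have := (hcont3.tendsto 0).comp hI
  simpa [Function.comp_def, one_div, ENNReal.zero_rpow_of_pos (by positivity : (0:ℝ) < p⁻¹)] using this
end

section
/- Let (Ω, 𝒜, μ) be a measure space, m : Ω → ℝ measurable, and for V ∈ Borel(ℝ) define P̂(V) : L²(Ω,μ) → L²(Ω,μ) by P̂(V) f = 1_{m⁻¹(V)} · f. Then P̂ is a projection-valued measure on Borel(ℝ), and the spectral integral ∫_ℝ id dP̂ equals the multiplication operator T by m (with domain { f : m f ∈ L² }), including equality of domains. -/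
open MeasureTheory InnerProductSpace

section Aux

variable {Ω : Type*} [MeasurableSpace Ω] {μ : Measure Ω}

private lemma aux_sq_integrable (f : Lp ℂ 2 μ) : Integrable (fun ω => ‖f ω‖ ^ 2) μ :=
  (memLp_two_iff_integrable_sq_norm (Lp.aestronglyMeasurable f)).mp (Lp.memLp f)

private lemma aux_conj_mul (z : ℂ) : (starRingEnd ℂ) z * z = ((‖z‖ ^ 2 : ℝ) : ℂ) := by
  rw [← Complex.normSq_eq_conj_mul_self]
  norm_cast
  rw [Complex.normSq_eq_norm_sq]

private lemma aux_sum_indicator {A : ℕ → Set Ω} (hd : Pairwise (Function.onFun Disjoint A))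
    (g : Ω → ℂ) (s : Finset ℕ) :
    ∑ n ∈ s, (A n).indicator g = (⋃ n ∈ s, A n).indicator g := by
  classical
  refine Finset.induction_on s (by simp; rfl) ?_
  intro a s ha ih
  have hdisj : Disjoint (A a) (⋃ n ∈ s, A n) := by
    apply Set.disjoint_iUnion_right.mpr
    intro n
    apply Set.disjoint_iUnion_right.mpr
    intro hn
    exact hd (fun h => ha (h ▸ hn))
  rw [Finset.sum_insert ha, ih, Finset.set_biUnion_insert,
    Set.indicator_union_of_disjoint hdisj]
  rfl

private lemma aux_inner_ind_self {S : Set Ω} (f q : Lp ℂ 2 μ)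
    (hq : (q : Ω → ℂ) =ᵐ[μ] S.indicator f) :
    ⟪q, f⟫_ℂ = ((∫ ω, S.indicator (fun ω => ‖f ω‖ ^ 2) ω ∂μ : ℝ) : ℂ) := by
  rw [MeasureTheory.L2.inner_def]
  have h : (fun a => (⟪(q : Ω → ℂ) a, (f : Ω → ℂ) a⟫_ℂ : ℂ)) =ᵐ[μ]
      fun ω => ((S.indicator (fun ω => ‖f ω‖ ^ 2) ω : ℝ) : ℂ) := by
    filter_upwards [hq] with ω hω
    rw [RCLike.inner_apply, hω]
    by_cases hmem : ω ∈ S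
    · rw [Set.indicator_of_mem hmem, Set.indicator_of_mem hmem, mul_comm, aux_conj_mul]
    · simp [Set.indicator_of_notMem hmem]
  rw [integral_congr_ae h]
  exact integral_ofReal

private lemma aux_inner_ind_self' {S : Set Ω} (f q : Lp ℂ 2 μ)
    (hq : (q : Ω → ℂ) =ᵐ[μ] S.indicator f) :
    ⟪q, q⟫_ℂ = ((∫ ω, S.indicator (fun ω => ‖f ω‖ ^ 2) ω ∂μ : ℝ) : ℂ) := by
  rw [MeasureTheory.L2.inner_def]
  have h : (fun a => (⟪(q : Ω → ℂ) a, (q : Ω → ℂ) a⟫_ℂ : ℂ)) =ᵐ[μ]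
      fun ω => ((S.indicator (fun ω => ‖f ω‖ ^ 2) ω : ℝ) : ℂ) := by
    filter_upwards [hq] with ω hω
    rw [RCLike.inner_apply, hω]
    by_cases hmem : ω ∈ S
    · rw [Set.indicator_of_mem hmem, Set.indicator_of_mem hmem, mul_comm, aux_conj_mul]
    · simp [Set.indicator_of_notMem hmem]
  rw [integral_congr_ae h]
  exact integral_ofReal

private lemma aux_integral_eq {S : Set Ω} (hS : MeasurableSet S) (f : Lp ℂ 2 μ) :
    ENNReal.ofReal (∫ ω, S.indicator (fun ω => ‖f ω‖ ^ 2) ω ∂μ)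
      = ∫⁻ ω in S, (‖f ω‖₊ : ENNReal) ^ 2 ∂μ := by
  rw [MeasureTheory.ofReal_integral_eq_lintegral_ofReal
    ((aux_sq_integrable f).indicator hS)
    (Filter.Eventually.of_forall fun ω => Set.indicator_nonneg (fun ω _ => sq_nonneg _) ω),
    ← lintegral_indicator hS]
  congr 1
  funext ω
  by_cases hmem : ω ∈ S
  · rw [Set.indicator_of_mem hmem, Set.indicator_of_mem hmem,
      ENNReal.ofReal_pow (norm_nonneg _), ← enorm_eq_nnnorm, ofReal_norm]
  · simp [Set.indicator_of_notMem hmem]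

private lemma aux_integral_eq' {S : Set Ω} (hS : MeasurableSet S) (f : Lp ℂ 2 μ) :
    ∫ ω, S.indicator (fun ω => ‖f ω‖ ^ 2) ω ∂μ
      = (∫⁻ ω in S, (‖f ω‖₊ : ENNReal) ^ 2 ∂μ).toReal := by
  rw [← aux_integral_eq hS f, ENNReal.toReal_ofReal]
  exact integral_nonneg fun ω => Set.indicator_nonneg (fun ω _ => sq_nonneg _) ω

private lemma aux_norm_sq {S : Set Ω} (hS : MeasurableSet S) (f q : Lp ℂ 2 μ)
    (hq : (q : Ω → ℂ) =ᵐ[μ] S.indicator f) :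
    ‖q‖ ^ 2 = (∫⁻ ω in S, (‖f ω‖₊ : ENNReal) ^ 2 ∂μ).toReal := by
  rw [← @inner_self_eq_norm_sq ℂ _ _ _ _ q, aux_inner_ind_self' f q hq]
  rw [RCLike.re_to_complex, Complex.ofReal_re, aux_integral_eq' hS f]

private lemma aux_memℒp_iff {g : Ω → ℂ} (hg : AEStronglyMeasurable g μ) :
    MemLp g 2 μ ↔ ∫⁻ ω, (‖g ω‖₊ : ENNReal) ^ 2 ∂μ < ⊤ := by
  constructor
  · intro h
    have h2 := h.2
    rw [eLpNorm_lt_top_iff_lintegral_rpow_enorm_lt_top two_ne_zero ENNReal.ofNat_ne_top] at h2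
    simpa [ENNReal.toReal_ofNat, ENNReal.rpow_two, enorm_eq_nnnorm] using h2
  · intro h
    refine ⟨hg, ?_⟩
    rw [eLpNorm_lt_top_iff_lintegral_rpow_enorm_lt_top two_ne_zero ENNReal.ofNat_ne_top]
    simpa [ENNReal.toReal_ofNat, ENNReal.rpow_two, enorm_eq_nnnorm] using h

private lemma aux_lintegral_fin (f : Lp ℂ 2 μ) :
    ∫⁻ ω, (‖f ω‖₊ : ENNReal) ^ 2 ∂μ < ⊤ := by
  have h := (Lp.memLp f).2
  rw [eLpNorm_lt_top_iff_lintegral_rpow_enorm_lt_top two_ne_zero ENNReal.ofNat_ne_top] at h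
  simpa [ENNReal.toReal_ofNat, ENNReal.rpow_two, enorm_eq_nnnorm] using h

end Aux

/-- For a measurable `m : Ω → ℝ`, the assignment
`P̂(V) f = 1_{m⁻¹(V)} · f` on `L²(Ω,μ)` is a projection-valued measure on `Borel(ℝ)`, and the
spectral integral `∫ id dP̂` coincides with the multiplication operator `T` by `m`, including
equality of domains: with `ν_f(V) = ⟪P̂(V) f, f⟫`, one has `m·f ∈ L² ↔ ∫ t² dν_f < ∞`, and in
that case the quadratic form satisfies `∫ t dν_f = ∫ m |f|² dμ = ⟪f, T f⟫`. -/
theorem stmt16 {Ω : Type*} [MeasurableSpace Ω] (μ : Measure Ω)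
    (m : Ω → ℝ) (hm : Measurable m)
    (Phat : Set ℝ → (Lp ℂ 2 μ →L[ℂ] Lp ℂ 2 μ))
    (hPhat : ∀ V : Set ℝ, MeasurableSet V → ∀ f : Lp ℂ 2 μ,
      (Phat V f : Ω → ℂ) =ᵐ[μ] (m ⁻¹' V).indicator f)
    (ν : Lp ℂ 2 μ → Measure ℝ)
    (hν : ∀ (f : Lp ℂ 2 μ) (V : Set ℝ), MeasurableSet V →
      ν f V = ENNReal.ofReal ((⟪Phat V f, f⟫_ℂ).re)) :
    (∀ V : Set ℝ, MeasurableSet V →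
      IsSelfAdjoint (Phat V) ∧ (Phat V).comp (Phat V) = Phat V) ∧
    Phat ∅ = 0 ∧
    Phat Set.univ = 1 ∧
    (∀ V₁ V₂ : Set ℝ, MeasurableSet V₁ → MeasurableSet V₂ →
      Phat (V₁ ∩ V₂) = (Phat V₁).comp (Phat V₂)) ∧
    (∀ V : ℕ → Set ℝ, (∀ n, MeasurableSet (V n)) →
      Pairwise (Function.onFun Disjoint V) →
      ∀ f : Lp ℂ 2 μ, HasSum (fun n => Phat (V n) f) (Phat (⋃ n, V n) f)) ∧
    (∀ f : Lp ℂ 2 μ,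
      MemLp (fun ω => (m ω : ℂ) * f ω) 2 μ ↔ Integrable (fun t : ℝ => t ^ 2) (ν f)) ∧
    (∀ f : Lp ℂ 2 μ, MemLp (fun ω => (m ω : ℂ) * f ω) 2 μ →
      ∫ t, t ∂(ν f) = ∫ ω, m ω * Complex.normSq (f ω) ∂μ) := by
  -- the density measure and pushforward measure associated to `f`
  set d : Lp ℂ 2 μ → Ω → NNReal := fun f ω => ‖f ω‖₊ ^ 2 with hd_def
  have hd_meas : ∀ f : Lp ℂ 2 μ, AEMeasurable (fun ω => ((d f ω : NNReal) : ENNReal)) μ := by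
    intro f
    have := (Lp.aestronglyMeasurable f).aemeasurable.enorm
    simpa [hd_def, ENNReal.coe_pow, enorm_eq_nnnorm] using this.pow_const 2
  set ρ : Lp ℂ 2 μ → Measure Ω := fun f => μ.withDensity (fun ω => ((d f ω : NNReal) : ENNReal))
    with hρ_def
  set κ : Lp ℂ 2 μ → Measure ℝ := fun f => (ρ f).map m with hκ_def
  have hρ_apply : ∀ (f : Lp ℂ 2 μ) (W : Set Ω), MeasurableSet W →
      ρ f W = ∫⁻ ω in W, (‖f ω‖₊ : ENNReal) ^ 2 ∂μ := by
    intro f W hW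
    rw [hρ_def, withDensity_apply _ hW]
    simp [hd_def, ENNReal.coe_pow]
  have hκ_apply : ∀ (f : Lp ℂ 2 μ) (V : Set ℝ), MeasurableSet V →
      κ f V = ∫⁻ ω in m ⁻¹' V, (‖f ω‖₊ : ENNReal) ^ 2 ∂μ := by
    intro f V hV
    rw [hκ_def, Measure.map_apply hm hV, hρ_apply f _ (hm hV)]
  -- identification of ν with κ
  have hνκ : ∀ f : Lp ℂ 2 μ, ν f = κ f := by
    intro f
    refine Measure.ext fun V hV => ?_
    rw [hν f V hV, hκ_apply f V hV,
      aux_inner_ind_self f (Phat V f) (hPhat V hV f),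
      Complex.ofReal_re, aux_integral_eq (hm hV) f]
  -- symmetry
  have hsym : ∀ V : Set ℝ, MeasurableSet V → ∀ x y : Lp ℂ 2 μ,
      ⟪Phat V x, y⟫_ℂ = ⟪x, Phat V y⟫_ℂ := by
    intro V hV x y
    rw [MeasureTheory.L2.inner_def, MeasureTheory.L2.inner_def]
    apply integral_congr_ae
    filter_upwards [hPhat V hV x, hPhat V hV y] with ω h1 h2
    rw [RCLike.inner_apply, RCLike.inner_apply, h1, h2]
    by_cases hmem : ω ∈ m ⁻¹' V
    · rw [Set.indicator_of_mem hmem, Set.indicator_of_mem hmem]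
    · simp [Set.indicator_of_notMem hmem]
  -- finite additivity (two sets)
  have hadd : ∀ A B : Set ℝ, MeasurableSet A → MeasurableSet B → Disjoint A B →
      ∀ f : Lp ℂ 2 μ, Phat (A ∪ B) f = Phat A f + Phat B f := by
    intro A B hA hB hAB f
    apply Lp.ext
    filter_upwards [hPhat (A ∪ B) (hA.union hB) f, hPhat A hA f, hPhat B hB f,
      Lp.coeFn_add (Phat A f) (Phat B f)] with ω h0 h1 h2 h3
    rw [h0, h3]
    simp only [Pi.add_apply]
    rw [h1, h2, Set.preimage_union, Set.indicator_union_of_disjoint (hAB.preimage m)]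
  have hempty : Phat ∅ = 0 := by
    refine ContinuousLinearMap.ext fun f => ?_
    apply Lp.ext
    filter_upwards [hPhat ∅ MeasurableSet.empty f, Lp.coeFn_zero ℂ 2 μ] with ω h1 h2
    simp only [ContinuousLinearMap.zero_apply]
    rw [h2]
    simpa using h1
  refine ⟨?_, ?_, ?_, ?_, ?_, ?_, ?_⟩
  · -- self-adjoint projections
    intro V hV
    constructor
    · exact LinearMap.IsSymmetric.isSelfAdjoint (fun x y => hsym V hV x y)
    · refine ContinuousLinearMap.ext fun f => ?_
      apply Lp.ext
      have h1 := hPhat V hV f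
      have h2 := hPhat V hV (Phat V f)
      filter_upwards [h1, h2] with ω hω1 hω2
      simp only [ContinuousLinearMap.comp_apply]
      rw [hω2]
      by_cases hmem : ω ∈ m ⁻¹' V
      · rw [Set.indicator_of_mem hmem, hω1]
      · rw [Set.indicator_of_notMem hmem, hω1, Set.indicator_of_notMem hmem]
  · -- empty set
    exact hempty
  · -- universal set
    refine ContinuousLinearMap.ext fun f => ?_
    apply Lp.ext
    filter_upwards [hPhat Set.univ MeasurableSet.univ f] with ω h1
    simpa using h1
  · -- intersections
    intro V₁ V₂ hV₁ hV₂
    refine ContinuousLinearMap.ext fun f => ?_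
    apply Lp.ext
    filter_upwards [hPhat (V₁ ∩ V₂) (hV₁.inter hV₂) f, hPhat V₂ hV₂ f,
      hPhat V₁ hV₁ (Phat V₂ f)] with ω h0 h2 h1
    simp only [ContinuousLinearMap.comp_apply]
    rw [h0, h1, Set.preimage_inter]
    by_cases h₁ : ω ∈ m ⁻¹' V₁
    · rw [Set.indicator_of_mem h₁, h2]
      by_cases h₂ : ω ∈ m ⁻¹' V₂
      · rw [Set.indicator_of_mem h₂, Set.indicator_of_mem (Set.mem_inter h₁ h₂)]
      · rw [Set.indicator_of_notMem h₂, Set.indicator_of_notMem (fun hc => h₂ hc.2)]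
    · rw [Set.indicator_of_notMem h₁, Set.indicator_of_notMem (fun hc => h₁ hc.1)]
  · -- countable additivity
    intro V hV hdisj f
    classical
    set S : Set ℝ := ⋃ n, V n with hS_def
    have hSmeas : MeasurableSet S := MeasurableSet.iUnion hV
    have hUs : ∀ s : Finset ℕ, MeasurableSet (⋃ n ∈ s, V n) := fun s =>
      MeasurableSet.biUnion s.countable_toSet (fun n _ => hV n)
    have hsub : ∀ s : Finset ℕ, (⋃ n ∈ s, V n) ⊆ S := fun s =>
      Set.iUnion₂_subset fun n _ => Set.subset_iUnion V n
    have hpartial : ∀ s : Finset ℕ, ∑ n ∈ s, Phat (V n) f = Phat (⋃ n ∈ s, V n) f := by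
      intro s
      refine Finset.induction_on s ?_ ?_
      · simp [hempty]
      · intro a s ha ih
        have hdisj2 : Disjoint (V a) (⋃ n ∈ s, V n) := by
          apply Set.disjoint_iUnion_right.mpr
          intro n
          apply Set.disjoint_iUnion_right.mpr
          intro hn
          exact hdisj (fun h => ha (h ▸ hn))
        rw [Finset.sum_insert ha, ih, Finset.set_biUnion_insert,
          hadd (V a) (⋃ n ∈ s, V n) (hV a) (hUs s) hdisj2 f]
    have hdiff : ∀ s : Finset ℕ,
        Phat S f - Phat (⋃ n ∈ s, V n) f = Phat (S \ ⋃ n ∈ s, V n) f := by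
      intro s
      have h1 : Phat S f = Phat (⋃ n ∈ s, V n) f + Phat (S \ ⋃ n ∈ s, V n) f := by
        have := hadd (⋃ n ∈ s, V n) (S \ ⋃ n ∈ s, V n) (hUs s) (hSmeas.diff (hUs s))
          disjoint_sdiff_self_right f
        rw [← this, Set.union_diff_cancel (hsub s)]
      exact sub_eq_of_eq_add' h1
    have hnormW : ∀ W : Set ℝ, MeasurableSet W → ‖Phat W f‖ ^ 2 = ((κ f) W).toReal := by
      intro W hW
      rw [hκ_apply f W hW]
      exact aux_norm_sq (hm hW) f _ (hPhat W hW f)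
    have hκuniv : κ f Set.univ ≠ ⊤ := by
      rw [hκ_apply f Set.univ MeasurableSet.univ]
      simp only [Set.preimage_univ, Measure.restrict_univ]
      exact (aux_lintegral_fin f).ne
    have hκS_ne : κ f S ≠ ⊤ := ne_top_of_le_ne_top hκuniv (measure_mono (Set.subset_univ S))
    have hκadd : HasSum (fun n => κ f (V n)) (κ f S) := by
      have h1 : κ f S = ∑' n, κ f (V n) := measure_iUnion hdisj hV
      rw [h1]
      exact ENNReal.summable.hasSum
    have htend : Filter.Tendsto (fun s : Finset ℕ => κ f (S \ ⋃ n ∈ s, V n))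
        Filter.atTop (nhds 0) := by
      have h1 : Filter.Tendsto (fun s : Finset ℕ => κ f S - ∑ n ∈ s, κ f (V n))
          Filter.atTop (nhds (κ f S - κ f S)) :=
        ENNReal.Tendsto.sub tendsto_const_nhds hκadd (Or.inl hκS_ne)
      rw [tsub_self] at h1
      refine h1.congr fun s => ?_
      rw [measure_diff (hsub s) (hUs s).nullMeasurableSet
        (ne_top_of_le_ne_top hκS_ne (measure_mono (hsub s))),
        measure_biUnion_finset (hdisj.set_pairwise _) (fun n _ => hV n)]
    have hkey : ∀ s : Finset ℕ, ‖∑ n ∈ s, Phat (V n) f - Phat S f‖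
        = Real.sqrt ((κ f (S \ ⋃ n ∈ s, V n)).toReal) := by
      intro s
      rw [hpartial s, norm_sub_rev, hdiff s,
        ← hnormW _ (hSmeas.diff (hUs s)), Real.sqrt_sq (norm_nonneg _)]
    refine tendsto_iff_norm_sub_tendsto_zero.mpr ?_
    have h3 : Filter.Tendsto (fun s : Finset ℕ => (κ f (S \ ⋃ n ∈ s, V n)).toReal)
        Filter.atTop (nhds 0) := by
      simpa [Function.comp_def] using (ENNReal.tendsto_toReal (a := 0) (by simp)).comp htend
    have h4 : Filter.Tendsto (fun s : Finset ℕ => Real.sqrt ((κ f (S \ ⋃ n ∈ s, V n)).toReal))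
        Filter.atTop (nhds 0) := by
      simpa [Function.comp_def] using (Real.continuous_sqrt.tendsto 0).comp h3
    exact h4.congr fun s => (hkey s).symm
  · -- domain characterization
    intro f
    have ha : AEStronglyMeasurable (fun ω => (m ω : ℂ) * f ω) μ :=
      ((Complex.measurable_ofReal.comp hm).aestronglyMeasurable.mul
        (Lp.aestronglyMeasurable f))
    have hgmeas : Measurable fun t : ℝ => ((‖t ^ 2‖₊ : NNReal) : ENNReal) :=
      (measurable_id.pow_const 2).enorm
    have hmap : ∫⁻ t, ((‖t ^ 2‖₊ : NNReal) : ENNReal) ∂(κ f)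
        = ∫⁻ ω, (‖(m ω : ℂ) * f ω‖₊ : ENNReal) ^ 2 ∂μ := by
      rw [hκ_def]
      rw [lintegral_map hgmeas hm]
      rw [hρ_def]
      beta_reduce
      rw [lintegral_withDensity_eq_lintegral_mul₀' (hd_meas f)
        (g := fun ω => ((‖m ω ^ 2‖₊ : NNReal) : ENNReal)) ((hgmeas.comp hm).aemeasurable)]
      refine lintegral_congr fun ω => ?_
      simp only [hd_def, Pi.mul_apply]
      push_cast [nnnorm_mul, nnnorm_pow, Complex.nnnorm_real]
      ring
    rw [hνκ f, aux_memℒp_iff ha]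
    constructor
    · intro h
      refine ⟨(measurable_id.pow_const 2).aestronglyMeasurable, ?_⟩
      show ∫⁻ t, ((‖t ^ 2‖₊ : NNReal) : ENNReal) ∂(κ f) < ⊤
      rw [hmap]
      exact h
    · intro h
      have h2 : ∫⁻ t, ((‖t ^ 2‖₊ : NNReal) : ENNReal) ∂(κ f) < ⊤ := h.2
      rw [hmap] at h2
      exact h2
  · -- quadratic form
    intro f _
    have hd' : AEMeasurable (fun ω => d f ω) μ := by
      have h1 : AEMeasurable (fun ω => ‖f ω‖₊) μ :=
        continuous_nnnorm.measurable.comp_aemeasurable (Lp.aestronglyMeasurable f).aemeasurable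
      exact h1.pow_const 2
    rw [hνκ f, hκ_def, integral_map (φ := m) hm.aemeasurable
        (f := fun t : ℝ => t) measurable_id.aestronglyMeasurable, hρ_def]
    beta_reduce
    rw [integral_withDensity_eq_integral_smul₀ hd' m]
    refine integral_congr_ae (Filter.Eventually.of_forall fun ω => ?_)
    simp only [hd_def, NNReal.smul_def, NNReal.coe_pow, coe_nnnorm, smul_eq_mul]
    rw [Complex.normSq_eq_norm_sq, mul_comm]
end
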